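/- arXiv:1502.01811 — 3 statements merged into one kernel-verified Lean document; each statement's English description precedes it below -/
import Mathlib

section
/- Let S and Y be independent nonnegative random variables where Y is exponentially distributed with rate λ > 0 and S has a distribution with unbounded support (i.e., P(S > s) > 0 for all s > 0). Then the product X = S·Y is heavy-tailed: for every θ > 0, limsup_{x→∞} e^{θx} P(X > x) = ∞. -/
open MeasureTheory ProbabilityTheory Filter

/-- If `Y` is exponential with rate `lam > 0` and `S` (independent of `Y`) has a
distribution with unbounded support, then `X = S * Y` is heavy-tailed. -/
theorem stmt0 {Ω : Type*} [MeasurableSpace Ω] (P : Measure Ω) [IsProbabilityMeasure P]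
    (S Y : Ω → ℝ) (hindep : IndepFun S Y P)
    (hS0 : ∀ᵐ ω ∂P, 0 ≤ S ω) (hY0 : ∀ᵐ ω ∂P, 0 ≤ Y ω)
    (lam : ℝ) (hlam : 0 < lam)
    (hYexp : ∀ y : ℝ, 0 ≤ y → P {ω | Y ω > y} = ENNReal.ofReal (Real.exp (-lam * y)))
    (hSunb : ∀ s : ℝ, 0 < s → 0 < P {ω | S ω > s}) :
    ∀ θ : ℝ, 0 < θ →
      Filter.limsup
        (fun x : ℝ => ENNReal.ofReal (Real.exp (θ * x)) * P {ω | S ω * Y ω > x})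
        atTop = ⊤ := by
  intro θ hθ
  set s : ℝ := lam / θ + 1 with hs
  have hspos : 0 < s := by positivity
  set c : ENNReal := P {ω | S ω > s} with hc
  have hcpos : 0 < c := hSunb s hspos
  have hcne : c ≠ 0 := hcpos.ne'
  have hrate : 0 < θ - lam / s := by
    have h1 : lam / s < θ := by
      rw [div_lt_iff₀ hspos, hs]
      have : lam / θ < lam / θ + 1 := by linarith
      calc lam = θ * (lam / θ) := by field_simp
        _ < θ * (lam / θ + 1) := by
            exact mul_lt_mul_of_pos_left this hθ
    linarith
  -- lower bound function
  set g : ℝ → ENNReal := fun x => ENNReal.ofReal (Real.exp ((θ - lam / s) * x)) * c with hg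
  have hle : ∀ᶠ x in atTop, g x ≤
      ENNReal.ofReal (Real.exp (θ * x)) * P {ω | S ω * Y ω > x} := by
    filter_upwards [eventually_gt_atTop (0 : ℝ)] with x hx
    have hsub : {ω | S ω > s} ∩ {ω | Y ω > x / s} ⊆ {ω | S ω * Y ω > x} := by
      rintro ω ⟨h1, h2⟩
      have h1' : s < S ω := h1
      have h2' : x / s < Y ω := h2
      have hxs : 0 < x / s := div_pos hx hspos
      have : s * (x / s) < S ω * Y ω :=
        mul_lt_mul h1' h2'.le hxs (le_trans hspos.le h1'.le)
      have hsx : s * (x / s) = x := by field_simp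
      simpa [Set.mem_setOf_eq, hsx] using this
    have hmeas := hindep.measure_inter_preimage_eq_mul (Set.Ioi s) (Set.Ioi (x / s))
      measurableSet_Ioi measurableSet_Ioi
    have hpre1 : S ⁻¹' Set.Ioi s = {ω | S ω > s} := rfl
    have hpre2 : Y ⁻¹' Set.Ioi (x / s) = {ω | Y ω > x / s} := rfl
    rw [hpre1, hpre2] at hmeas
    have hbound : c * ENNReal.ofReal (Real.exp (-lam * (x / s))) ≤
        P {ω | S ω * Y ω > x} := by
      rw [← hYexp (x / s) (div_nonneg hx.le hspos.le), ← hmeas]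
      exact measure_mono hsub
    calc g x = ENNReal.ofReal (Real.exp (θ * x)) *
          (c * ENNReal.ofReal (Real.exp (-lam * (x / s)))) := by
          show ENNReal.ofReal (Real.exp ((θ - lam / s) * x)) * c = _
          have : Real.exp ((θ - lam / s) * x)
              = Real.exp (θ * x) * Real.exp (-lam * (x / s)) := by
            rw [← Real.exp_add]; ring_nf
          rw [this, ENNReal.ofReal_mul (Real.exp_nonneg _)]
          ring
      _ ≤ _ := mul_le_mul_right hbound _
  have hgt : Tendsto g atTop (nhds ⊤) := by
    have h1 : Tendsto (fun x => (θ - lam / s) * x) atTop atTop :=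
      tendsto_id.const_mul_atTop hrate
    have h2 : Tendsto (fun x => ENNReal.ofReal (Real.exp ((θ - lam / s) * x)))
        atTop (nhds ⊤) :=
      ENNReal.tendsto_ofReal_atTop.comp (Real.tendsto_exp_atTop.comp h1)
    have h3 := ENNReal.Tendsto.mul_const h2 (b := c) (Or.inl ENNReal.top_ne_zero)
    simpa [ENNReal.top_mul hcne] using h3
  have hlim : limsup g atTop = ⊤ := hgt.limsup_eq
  have := limsup_le_limsup hle
  rw [hlim] at this
  exact top_le_iff.mp this
end

section
/- Zipf scaling asymptotics: for α ≥ 2 and λ > 0, let F̄(x) = (1/ζ(α)) ∑_{i=1}^∞ i^{-α} e^{-λx/i}. Then lim_{x→∞} x^{α-1} F̄(x) = Γ(α-1)/(ζ(α) λ^{α-1}); in particular F̄ is regularly varying with index -(α-1), so F belongs to the Fréchet maximum domain of attraction with index α - 1. -/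
open Filter

open Filter MeasureTheory Set

namespace Zipf16

noncomputable def f (α lam v : ℝ) : ℝ := v ^ (-α) * Real.exp (-(lam / v))

noncomputable def bnd (α lam u : ℝ) : ℝ :=
  min (max ((Nat.factorial ⌈α⌉₊ : ℝ) / lam ^ ⌈α⌉₊) 1) (u ^ (-α))

lemma f_nonneg (α lam : ℝ) {v : ℝ} (hv : 0 ≤ v) : 0 ≤ f α lam v := by
  unfold f; positivity

lemma f_le_rpow {α lam : ℝ} (hlam : 0 < lam) {v : ℝ} (hv : 0 < v) :
    f α lam v ≤ v ^ (-α) := by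
  have h1 : Real.exp (-(lam / v)) ≤ 1 := by
    rw [Real.exp_le_one_iff]
    have : 0 ≤ lam / v := by positivity
    linarith
  calc f α lam v ≤ v ^ (-α) * 1 := by
        unfold f
        have : (0:ℝ) ≤ v ^ (-α) := by positivity
        nlinarith [Real.exp_pos (-(lam / v))]
    _ = v ^ (-α) := mul_one _

lemma f_le_bnd {α lam : ℝ} (hα : 2 ≤ α) (hlam : 0 < lam) {u v : ℝ}
    (hu : 0 < u) (huv : u ≤ v) : f α lam v ≤ bnd α lam u := by
  have hv : 0 < v := hu.trans_le huv
  refine le_min ?_ ?_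
  · rcases le_or_gt v 1 with h1 | h1
    · refine le_max_of_le_left ?_
      set n := ⌈α⌉₊ with hn
      have hαn : α ≤ (n : ℝ) := Nat.le_ceil α
      have hexp : Real.exp (-(lam / v)) ≤ (Nat.factorial n : ℝ) * v ^ n / lam ^ n := by
        have h2 : ((lam / v) ^ n / (Nat.factorial n : ℝ)) ≤ Real.exp (lam / v) :=
          Real.pow_div_factorial_le_exp (lam / v) (by positivity) n
        have h3 : (0:ℝ) < (lam / v) ^ n / (Nat.factorial n : ℝ) := by positivity
        rw [Real.exp_neg]
        have h4 : (Real.exp (lam / v))⁻¹ ≤ ((lam / v) ^ n / (Nat.factorial n : ℝ))⁻¹ :=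
          inv_anti₀ h3 h2
        refine h4.trans (le_of_eq ?_)
        rw [div_pow]
        field_simp
      have hvα : (0:ℝ) ≤ v ^ (-α) := by positivity
      calc f α lam v ≤ v ^ (-α) * ((Nat.factorial n : ℝ) * v ^ n / lam ^ n) := by
            unfold f; exact mul_le_mul_of_nonneg_left hexp hvα
        _ = ((Nat.factorial n : ℝ) / lam ^ n) * (v ^ ((n : ℝ) - α)) := by
            rw [Real.rpow_sub hv, Real.rpow_natCast, Real.rpow_neg hv.le]; ring
        _ ≤ ((Nat.factorial n : ℝ) / lam ^ n) * 1 := by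
            refine mul_le_mul_of_nonneg_left ?_ (by positivity)
            exact Real.rpow_le_one hv.le h1 (by linarith)
        _ = (Nat.factorial n : ℝ) / lam ^ n := mul_one _
    · refine le_max_of_le_right ?_
      calc f α lam v ≤ v ^ (-α) := f_le_rpow hlam hv
        _ ≤ 1 := Real.rpow_le_one_of_one_le_of_nonpos h1.le (by linarith)
  · calc f α lam v ≤ v ^ (-α) := f_le_rpow hlam hv
      _ ≤ u ^ (-α) := Real.rpow_le_rpow_of_nonpos hu huv (by linarith)

lemma bnd_nonneg {α lam : ℝ} {u : ℝ} (hu : 0 ≤ u) : 0 ≤ bnd α lam u := by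
  refine le_min (le_trans zero_le_one (le_max_right _ _)) (by positivity)

lemma measurable_f (α lam : ℝ) : Measurable (f α lam) := by
  have h1 : Measurable fun v : ℝ => v ^ (-α) := by measurability
  exact h1.mul ((measurable_const.div measurable_id).neg.exp)

lemma bnd_measurable (α lam : ℝ) : Measurable (bnd α lam) := by
  have h1 : Measurable fun v : ℝ => v ^ (-α) := by measurability
  exact measurable_const.min h1

lemma bnd_integrable {α lam : ℝ} (hα : 2 ≤ α) (hlam : 0 < lam) :
    IntegrableOn (bnd α lam) (Ioi 0) := by
  have h : Ioc (0:ℝ) 1 ∪ Ioi 1 = Ioi 0 := by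
    rw [Ioc_union_Ioi_eq_Ioi]; norm_num
  rw [← h]
  refine IntegrableOn.union ?_ ?_
  · refine Integrable.mono' (g := fun _ => max ((Nat.factorial ⌈α⌉₊ : ℝ) / lam ^ ⌈α⌉₊) 1)
      (integrableOn_const ?_)
      ((bnd_measurable α lam).aestronglyMeasurable) ?_
    · rw [Real.volume_Ioc]; norm_num
    · rw [ae_restrict_iff' measurableSet_Ioc]
      filter_upwards with u hu
      rw [Real.norm_eq_abs, abs_of_nonneg (bnd_nonneg hu.1.le)]
      exact min_le_left _ _
  · refine Integrable.mono' (integrableOn_Ioi_rpow_of_lt (by linarith : -α < -1) one_pos)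
      ((bnd_measurable α lam).aestronglyMeasurable) ?_
    rw [ae_restrict_iff' measurableSet_Ioi]
    filter_upwards with u hu
    rw [Real.norm_eq_abs, abs_of_nonneg (bnd_nonneg (zero_le_one.trans (le_of_lt hu)))]
    exact min_le_right _ _

end Zipf16

namespace Zipf16

lemma integral_f {α lam : ℝ} (hα : 2 ≤ α) (hlam : 0 < lam) :
    ∫ u in Ioi (0:ℝ), f α lam u = (1 / lam) ^ (α - 1) * Real.Gamma (α - 1) := by
  have key := MeasureTheory.integral_comp_rpow_Ioi
    (fun y : ℝ => y ^ (α - 2) * Real.exp (-(lam * y))) (p := -1) (by norm_num)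
  calc ∫ u in Ioi (0:ℝ), f α lam u
      = ∫ x in Ioi (0:ℝ),
          (|(-1:ℝ)| * x ^ ((-1:ℝ) - 1)) • ((x ^ (-1:ℝ)) ^ (α - 2)
            * Real.exp (-(lam * x ^ (-1:ℝ)))) := by
        refine setIntegral_congr_fun measurableSet_Ioi (fun x hx => ?_)
        have hx0 : (0:ℝ) < x := hx
        rw [smul_eq_mul, abs_neg, abs_one, one_mul, Real.rpow_neg_one x,
          Real.inv_rpow hx0.le, ← Real.rpow_neg hx0.le, neg_sub, ← mul_assoc,
          ← Real.rpow_add hx0, ← div_eq_mul_inv]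
        have h5 : (-1:ℝ) - 1 + (2 - α) = -α := by ring
        rw [h5]
        rfl
    _ = ∫ y in Ioi (0:ℝ), y ^ (α - 2) * Real.exp (-(lam * y)) := key
    _ = (1 / lam) ^ (α - 1) * Real.Gamma (α - 1) := by
        have h6 := Real.integral_rpow_mul_exp_neg_mul_Ioi
          (a := α - 1) (r := lam) (by linarith) hlam
        rw [show α - 2 = α - 1 - 1 by ring]
        exact h6

noncomputable def g (α lam x u : ℝ) : ℝ := f α lam ((⌈x * u⌉₊ : ℝ) / x)

lemma measurable_g (α lam x : ℝ) : Measurable (g α lam x) := by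
  unfold g
  exact (measurable_f α lam).comp
    (((measurable_from_top.comp (Nat.measurable_ceil.comp
      (measurable_id.const_mul x))).div_const x))

lemma g_nonneg (α lam : ℝ) {x u : ℝ} (hx : 0 < x) : 0 ≤ g α lam x u := by
  unfold g; exact f_nonneg α lam (by positivity)

lemma g_le_bnd {α lam : ℝ} (hα : 2 ≤ α) (hlam : 0 < lam) {x u : ℝ}
    (hx : 0 < x) (hu : 0 < u) : g α lam x u ≤ bnd α lam u := by
  unfold g
  refine f_le_bnd hα hlam hu ?_
  rw [le_div_iff₀ hx]
  calc u * x = x * u := mul_comm u x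
    _ ≤ (⌈x * u⌉₊ : ℝ) := Nat.le_ceil _

lemma integrableOn_g {α lam : ℝ} (hα : 2 ≤ α) (hlam : 0 < lam) {x : ℝ} (hx : 0 < x) :
    IntegrableOn (g α lam x) (Ioi 0) := by
  refine Integrable.mono' (bnd_integrable hα hlam)
    ((measurable_g α lam x).aestronglyMeasurable) ?_
  rw [ae_restrict_iff' measurableSet_Ioi]
  filter_upwards with u hu
  rw [Real.norm_eq_abs, abs_of_nonneg (g_nonneg α lam hx)]
  exact g_le_bnd hα hlam hx hu

lemma sum_eq_integral {α lam : ℝ} (hα : 2 ≤ α) (hlam : 0 < lam) {x : ℝ} (hx : 0 < x) :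
    x ^ (α - 1) * ∑' i : ℕ, ((i : ℝ) + 1) ^ (-α) * Real.exp (-lam * x / ((i : ℝ) + 1))
      = ∫ u in Ioi (0:ℝ), g α lam x u := by
  set s : ℕ → Set ℝ := fun i => Ioc ((i:ℝ)/x) (((i:ℝ)+1)/x) with hs
  have hu : ⋃ i, s i = Ioi (0:ℝ) := by
    ext u
    simp only [hs, mem_iUnion, mem_Ioc, mem_Ioi]
    constructor
    · rintro ⟨i, h1, h2⟩
      have : (0:ℝ) ≤ (i:ℝ)/x := by positivity
      linarith
    · intro hu0
      have hxu : 0 < x * u := by positivity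
      have hk : 1 ≤ ⌈x*u⌉₊ := Nat.one_le_iff_ne_zero.2 (Nat.ceil_pos.2 hxu).ne'
      refine ⟨⌈x*u⌉₊ - 1, ?_, ?_⟩
      · have hcast : ((⌈x*u⌉₊ - 1 : ℕ) : ℝ) = (⌈x*u⌉₊ : ℝ) - 1 := by
          push_cast [hk]; ring
        rw [hcast, div_lt_iff₀ hx]
        have := Nat.ceil_lt_add_one hxu.le
        linarith [this]
      · have hcast : ((⌈x*u⌉₊ - 1 : ℕ) : ℝ) + 1 = (⌈x*u⌉₊ : ℝ) := by
          push_cast [hk]; ring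
        rw [hcast, le_div_iff₀ hx]
        calc u * x = x * u := mul_comm u x
          _ ≤ (⌈x*u⌉₊:ℝ) := Nat.le_ceil _
  have hmeas : ∀ i, MeasurableSet (s i) := fun i => measurableSet_Ioc
  have hdisj : Pairwise (Function.onFun Disjoint s) := by
    have key : ∀ {i j : ℕ}, i < j → Disjoint (s i) (s j) := by
      intro i j hij
      rw [Set.disjoint_left]
      rintro u ⟨_, h2⟩ ⟨h3, _⟩
      have hij' : ((i:ℝ)+1) ≤ (j:ℝ) := by exact_mod_cast hij
      have : ((i:ℝ)+1)/x ≤ (j:ℝ)/x := by gcongr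
      linarith
    intro i j hij
    rcases hij.lt_or_gt with h | h
    · exact key h
    · exact (key h).symm
  have hint := integrableOn_g hα hlam (x := x) hx
  rw [← hu] at hint
  have hIU : ∫ u in Ioi (0:ℝ), g α lam x u = ∑' i : ℕ, ∫ u in s i, g α lam x u := by
    rw [← hu]
    exact integral_iUnion hmeas hdisj hint
  have hpiece : ∀ i : ℕ, ∫ u in s i, g α lam x u
      = x ^ (α - 1) * (((i:ℝ)+1) ^ (-α) * Real.exp (-lam * x / ((i:ℝ)+1))) := by
    intro i
    have hi : (0:ℝ) < (i:ℝ)+1 := by positivity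
    have hconst : ∀ u ∈ s i, g α lam x u = f α lam (((i:ℝ)+1)/x) := by
      intro u hu'
      obtain ⟨h1, h2⟩ := hu'
      have hxu : ⌈x*u⌉₊ = i + 1 := by
        rw [Nat.ceil_eq_iff (Nat.succ_ne_zero i)]
        rw [div_lt_iff₀ hx] at h1
        rw [le_div_iff₀ hx] at h2
        constructor
        · simp only [Nat.succ_sub_one]
          exact_mod_cast (by linarith : (i:ℝ) < x*u)
        · exact_mod_cast (by linarith : x*u ≤ (i:ℝ)+1)
      unfold g
      rw [hxu]
      push_cast
      ring_nf
    rw [setIntegral_congr_fun (hmeas i) hconst, setIntegral_const]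
    have hvol : (volume (s i)).toReal = 1/x := by
      rw [hs]
      simp only [Real.volume_Ioc]
      rw [show ((i:ℝ)+1)/x - (i:ℝ)/x = 1/x by field_simp; ring]
      rw [ENNReal.toReal_ofReal (by positivity)]
    rw [Measure.real, hvol, smul_eq_mul]
    unfold f
    have e1 : (((i:ℝ)+1)/x) ^ (-α) = ((i:ℝ)+1) ^ (-α) / x ^ (-α) :=
      Real.div_rpow hi.le hx.le (-α)
    have e2 : x ^ (α - 1) = x ^ α / x := by
      rw [Real.rpow_sub hx, Real.rpow_one]
    have e3 : x ^ (-α) = (x ^ α)⁻¹ := Real.rpow_neg hx.le α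
    have e4 : lam / (((i:ℝ)+1)/x) = lam * x / ((i:ℝ)+1) := by
      rw [div_div_eq_mul_div]
    have e5 : -lam * x / ((i:ℝ)+1) = -(lam * x / ((i:ℝ)+1)) := by ring
    rw [e1, e2, e3, e4, e5]
    have hxα : (0:ℝ) < x ^ α := Real.rpow_pos_of_pos hx α
    field_simp
  rw [hIU]
  rw [funext hpiece]
  rw [tsum_mul_left]

lemma tendsto_integral_g {α lam : ℝ} (hα : 2 ≤ α) (hlam : 0 < lam) :
    Tendsto (fun x : ℝ => ∫ u in Ioi (0:ℝ), g α lam x u) atTop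
      (nhds ((1 / lam) ^ (α - 1) * Real.Gamma (α - 1))) := by
  rw [← integral_f hα hlam]
  refine tendsto_integral_filter_of_dominated_convergence (bnd α lam) ?_ ?_
    (bnd_integrable hα hlam) ?_
  · filter_upwards with x
    exact (measurable_g α lam x).aestronglyMeasurable
  · filter_upwards [eventually_gt_atTop (0:ℝ)] with x hx
    rw [ae_restrict_iff' measurableSet_Ioi]
    filter_upwards with u hu
    rw [Real.norm_eq_abs, abs_of_nonneg (g_nonneg α lam hx)]
    exact g_le_bnd hα hlam hx hu
  · rw [ae_restrict_iff' measurableSet_Ioi]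
    filter_upwards with u hu
    have hu0 : (0:ℝ) < u := hu
    have hv : Tendsto (fun x : ℝ => (⌈x*u⌉₊ : ℝ)/x) atTop (nhds u) := by
      have hupper : Tendsto (fun x : ℝ => u + x⁻¹) atTop (nhds (u + 0)) :=
        tendsto_const_nhds.add tendsto_inv_atTop_zero
      rw [add_zero] at hupper
      refine tendsto_of_tendsto_of_tendsto_of_le_of_le' tendsto_const_nhds hupper ?_ ?_
      · filter_upwards [eventually_gt_atTop (0:ℝ)] with x hx
        rw [le_div_iff₀ hx]
        calc u * x = x * u := mul_comm u x
          _ ≤ (⌈x*u⌉₊:ℝ) := Nat.le_ceil _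
      · filter_upwards [eventually_gt_atTop (0:ℝ)] with x hx
        rw [div_le_iff₀ hx]
        have h1 : (⌈x*u⌉₊:ℝ) < x*u + 1 := Nat.ceil_lt_add_one (by positivity)
        have h2 : (u + x⁻¹) * x = x*u + 1 := by field_simp
        linarith
    have hcont : ContinuousAt (f α lam) u := by
      refine ContinuousAt.mul ?_ ?_
      · exact Real.continuousAt_rpow_const u (-α) (Or.inl hu0.ne')
      · exact (Real.continuous_exp.continuousAt).comp
          ((continuousAt_const.div continuousAt_id hu0.ne').neg)
    exact hcont.tendsto.comp hv

end Zipf16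


open Zipf16

/-- Zipf scaling: the tail of the exponential mixture with Zipf(α) scaling is
asymptotically `Γ(α-1)/(ζ(α) λ^{α-1}) x^{-(α-1)}`; in particular it is regularly
varying with index `-(α-1)`, so the mixture lies in the Fréchet MDA of index `α-1`. -/
theorem stmt16 (α lam : ℝ) (hα : 2 ≤ α) (hlam : 0 < lam)
    (zeta : ℝ) (hzeta : zeta = ∑' i : ℕ, ((i : ℝ) + 1) ^ (-α))
    (Fbar : ℝ → ℝ)
    (hFbar : ∀ x : ℝ, Fbar x =
      (∑' i : ℕ, ((i : ℝ) + 1) ^ (-α) * Real.exp (-lam * x / ((i : ℝ) + 1))) / zeta) :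
    Filter.Tendsto (fun x : ℝ => x ^ (α - 1) * Fbar x) atTop
        (nhds (Real.Gamma (α - 1) / (zeta * lam ^ (α - 1)))) ∧
    (∀ t : ℝ, 0 < t →
      Filter.Tendsto (fun x : ℝ => Fbar (t * x) / Fbar x) atTop
        (nhds (t ^ (-(α - 1))))) := by
  have hzeta_pos : 0 < zeta := by
    rw [hzeta]
    have hsum : Summable (fun i : ℕ => ((i:ℝ)+1) ^ (-α)) := by
      have h1 : Summable (fun n : ℕ => (n:ℝ) ^ (-α)) :=
        Real.summable_nat_rpow.2 (by linarith)
      have h2 := (summable_nat_add_iff 1).2 h1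
      refine h2.congr fun n => ?_
      push_cast
      rfl
    refine Summable.tsum_pos hsum (fun i => Real.rpow_nonneg (by positivity) _) 0 ?_
    norm_num
  have heq : ((1 / lam) ^ (α - 1) * Real.Gamma (α - 1)) / zeta
      = Real.Gamma (α - 1) / (zeta * lam ^ (α - 1)) := by
    rw [one_div, Real.inv_rpow hlam.le, division_def, division_def, mul_inv]
    ring
  have h1 : Filter.Tendsto (fun x : ℝ => x ^ (α - 1) * Fbar x) atTop
      (nhds (Real.Gamma (α - 1) / (zeta * lam ^ (α - 1)))) := by
    rw [← heq]
    refine Filter.Tendsto.congr' ?_ ((tendsto_integral_g hα hlam).div_const zeta)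
    filter_upwards [eventually_gt_atTop (0:ℝ)] with x hx
    rw [hFbar x, ← sum_eq_integral hα hlam hx, mul_div_assoc]
  refine ⟨h1, ?_⟩
  intro t ht
  set L := Real.Gamma (α - 1) / (zeta * lam ^ (α - 1)) with hL
  have hLpos : 0 < L := by
    refine div_pos (Real.Gamma_pos_of_pos (by linarith)) ?_
    exact mul_pos hzeta_pos (Real.rpow_pos_of_pos hlam _)
  have hAt : Filter.Tendsto (fun x : ℝ => (t * x) ^ (α - 1) * Fbar (t * x)) atTop
      (nhds L) := h1.comp (Filter.tendsto_id.const_mul_atTop ht)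
  have hratio := hAt.div h1 hLpos.ne'
  rw [div_self hLpos.ne'] at hratio
  have hfinal := hratio.const_mul (t ^ (-(α - 1)))
  rw [mul_one] at hfinal
  refine Filter.Tendsto.congr' ?_ hfinal
  filter_upwards [eventually_gt_atTop (0:ℝ)] with x hx
  have hxα : (0:ℝ) < x ^ (α - 1) := Real.rpow_pos_of_pos hx _
  have htα : (0:ℝ) < t ^ (α - 1) := Real.rpow_pos_of_pos ht _
  have hmul : (t * x) ^ (α - 1) = t ^ (α - 1) * x ^ (α - 1) :=
    Real.mul_rpow ht.le hx.le
  have hneg : t ^ (-(α - 1)) = (t ^ (α - 1))⁻¹ := Real.rpow_neg ht.le _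
  simp only [Pi.div_apply]
  rcases eq_or_ne (Fbar x) 0 with h0 | h0
  · rw [h0]
    simp
  · rw [hmul, hneg]
    field_simp
end

section
/- Geometric scaling is heavy-tailed: let 0 < q < 1, λ > 0, p = 1 - q, and define F̄(x) = ∑_{i=1}^∞ p q^i e^{-λx/i} for x > 0. Then for every θ > 0, lim_{x→∞} e^{θx} F̄(x) = ∞; in fact F̄(x) = exp(-2√(λ|log q| x)(1 + o(1))) as x → ∞. -/
open Filter

lemma amgm_aux (a c : ℝ) (ha : 0 ≤ a) (hc : 0 ≤ c) :
    2 * Real.sqrt (a * c) ≤ a + c := by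
  rw [Real.sqrt_mul ha]
  nlinarith [Real.sq_sqrt ha, Real.sq_sqrt hc, sq_nonneg (Real.sqrt a - Real.sqrt c),
    Real.sqrt_nonneg a, Real.sqrt_nonneg c]

lemma sqrt_tendsto_aux : Tendsto (fun x : ℝ => Real.sqrt x) atTop atTop := by
  apply tendsto_atTop_atTop.mpr
  intro B
  refine ⟨max 0 (B ^ 2), fun y hy => ?_⟩
  calc B ≤ |B| := le_abs_self B
    _ = Real.sqrt (B ^ 2) := (Real.sqrt_sq_eq_abs B).symm
    _ ≤ Real.sqrt y := Real.sqrt_le_sqrt (le_trans (le_max_right _ _) hy)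

set_option maxHeartbeats 1000000 in
/-- Geometric scaling is heavy-tailed: the tail of the exponential mixture with
geometric scaling beats every exponential, and its logarithm is asymptotically
`-2√(λ|log q| x)`. -/
theorem stmt17 (q lam : ℝ) (hq0 : 0 < q) (hq1 : q < 1) (hlam : 0 < lam)
    (p : ℝ) (hp : p = 1 - q)
    (Fbar : ℝ → ℝ)
    (hFbar : ∀ x : ℝ, Fbar x =
      ∑' i : ℕ, p * q ^ (i + 1) * Real.exp (-lam * x / ((i : ℝ) + 1))) :
    (∀ θ : ℝ, 0 < θ →
      Filter.Tendsto (fun x : ℝ => Real.exp (θ * x) * Fbar x) atTop atTop) ∧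
    Filter.Tendsto
      (fun x : ℝ => Real.log (Fbar x) / (-2 * Real.sqrt (lam * |Real.log q| * x)))
      atTop (nhds 1) := by
  have hp0 : 0 < p := by rw [hp]; linarith
  have hp1 : p < 1 := by rw [hp]; linarith
  have hlogq : Real.log q < 0 := Real.log_neg hq0 hq1
  obtain ⟨b, hbdef⟩ : ∃ b : ℝ, b = -Real.log q := ⟨_, rfl⟩
  have hb : 0 < b := by rw [hbdef]; linarith
  have hlq : Real.log q = -b := by rw [hbdef]; ring
  have habs : |Real.log q| = b := by rw [hbdef, abs_of_neg hlogq]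
  have hlb : 0 < lam * b := mul_pos hlam hb
  obtain ⟨d, hddef⟩ : ∃ d : ℝ, d = 2 * Real.sqrt (lam * b) := ⟨_, rfl⟩
  have hd : 0 < d := by
    have := Real.sqrt_pos.mpr hlb
    rw [hddef]; linarith
  have hlogp : Real.log p < 0 := Real.log_neg hp0 hp1
  have hnonneg : ∀ (x : ℝ) (i : ℕ),
      0 ≤ p * q ^ (i + 1) * Real.exp (-lam * x / ((i : ℝ) + 1)) := fun x i =>
    mul_nonneg (mul_nonneg hp0.le (pow_nonneg hq0.le _)) (Real.exp_pos _).le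
  -- summability
  have hsummable : ∀ x : ℝ, 0 ≤ x →
      Summable (fun i : ℕ => p * q ^ (i + 1) * Real.exp (-lam * x / ((i : ℝ) + 1))) := by
    intro x hx
    refine Summable.of_nonneg_of_le (fun i => hnonneg x i) (fun i => ?_)
      ((summable_geometric_of_lt_one hq0.le hq1).mul_left (p * q))
    have h1 : Real.exp (-lam * x / ((i : ℝ) + 1)) ≤ 1 := by
      have h2 : 0 ≤ lam * x / ((i : ℝ) + 1) :=
        div_nonneg (mul_nonneg hlam.le hx) (by positivity)
      calc Real.exp (-lam * x / ((i : ℝ) + 1)) ≤ Real.exp 0 := by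
            apply Real.exp_le_exp.mpr
            rw [neg_mul, neg_div]; linarith
        _ = 1 := Real.exp_zero
    calc p * q ^ (i + 1) * Real.exp (-lam * x / ((i : ℝ) + 1))
        ≤ p * q ^ (i + 1) * 1 := by
          apply mul_le_mul_of_nonneg_left h1
            (mul_nonneg hp0.le (pow_nonneg hq0.le _))
      _ = (p * q) * q ^ i := by ring
  -- lower bound
  have hlow : ∀ x : ℝ, 0 < x →
      p * Real.exp (-b) * Real.exp (-(d * Real.sqrt x)) ≤ Fbar x := by
    intro x hx
    rw [hFbar]
    obtain ⟨u, hudef⟩ : ∃ u : ℝ, u = Real.sqrt (lam * b * x) := ⟨_, rfl⟩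
    have hu2 : u ^ 2 = lam * b * x := by rw [hudef]; exact Real.sq_sqrt (mul_pos hlb hx).le
    have hu0 : 0 < u := by rw [hudef]; exact Real.sqrt_pos.mpr (mul_pos hlb hx)
    have hueq : d * Real.sqrt x = 2 * u := by
      rw [hudef, hddef, Real.sqrt_mul hlb.le]; ring
    obtain ⟨m, hm⟩ : ∃ m : ℕ, ⌈u / b⌉₊ = m + 1 := by
      have h0 : 0 < ⌈u / b⌉₊ := Nat.ceil_pos.mpr (div_pos hu0 hb)
      exact ⟨⌈u / b⌉₊ - 1, by omega⟩
    have hns : u / b ≤ (m : ℝ) + 1 := by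
      have := Nat.le_ceil (u / b); rw [hm] at this; push_cast at this; linarith
    have hns' : (m : ℝ) + 1 < u / b + 1 := by
      have := Nat.ceil_lt_add_one (le_of_lt (div_pos hu0 hb))
      rw [hm] at this; push_cast at this; linarith
    have hterm := Summable.le_tsum (hsummable x hx.le) m (fun j _ => hnonneg x j)
    refine le_trans ?_ hterm
    have hM : (0 : ℝ) < (m : ℝ) + 1 := by positivity
    have hq_pow : q ^ (m + 1) = Real.exp (-(((m : ℝ) + 1) * b)) := by
      rw [← Real.exp_log hq0, ← Real.exp_nat_mul]
      congr 1
      rw [hlq]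
      push_cast; ring
    have hexp1 : ((m : ℝ) + 1) * b ≤ u + b := by
      have h5 := mul_lt_mul_of_pos_right hns' hb
      have heq : (u / b + 1) * b = u + b := by field_simp
      rw [heq] at h5
      exact h5.le
    have hexp2 : lam * x / ((m : ℝ) + 1) ≤ u := by
      have h3 : lam * x / ((m : ℝ) + 1) ≤ lam * x / (u / b) :=
        div_le_div_of_nonneg_left (mul_nonneg hlam.le hx.le) (div_pos hu0 hb) hns
      have h4 : lam * x / (u / b) = u := by
        rw [div_div_eq_mul_div, div_eq_iff hu0.ne']
        nlinarith [hu2]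
      linarith
    rw [hq_pow]
    have e1 : p * Real.exp (-b) * Real.exp (-(d * Real.sqrt x))
        = p * Real.exp (-b + -(d * Real.sqrt x)) := by rw [Real.exp_add]; ring
    have e2 : p * Real.exp (-(((m : ℝ) + 1) * b)) * Real.exp (-lam * x / ((m : ℝ) + 1))
        = p * Real.exp (-(((m : ℝ) + 1) * b) + -lam * x / ((m : ℝ) + 1)) := by
      rw [Real.exp_add]; ring
    rw [e1, e2]
    apply mul_le_mul_of_nonneg_left _ hp0.le
    apply Real.exp_le_exp.mpr
    rw [hueq]
    have h6 : -lam * x / ((m : ℝ) + 1) = -(lam * x / ((m : ℝ) + 1)) := by ring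
    rw [h6]
    linarith
  have hFpos : ∀ x : ℝ, 0 < x → 0 < Fbar x := fun x hx =>
    lt_of_lt_of_le (mul_pos (mul_pos hp0 (Real.exp_pos _)) (Real.exp_pos _)) (hlow x hx)
  have hloglow : ∀ x : ℝ, 0 < x →
      Real.log p - b - d * Real.sqrt x ≤ Real.log (Fbar x) := by
    intro x hx
    have h := Real.log_le_log (mul_pos (mul_pos hp0 (Real.exp_pos _)) (Real.exp_pos _))
      (hlow x hx)
    rw [Real.log_mul (mul_pos hp0 (Real.exp_pos _)).ne' (Real.exp_ne_zero _),
      Real.log_mul hp0.ne' (Real.exp_ne_zero _), Real.log_exp, Real.log_exp] at h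
    linarith
  -- upper bound
  have hupp : ∀ δ : ℝ, 0 < δ → δ < 1 → ∃ C : ℝ, 0 < C ∧ ∀ x : ℝ, 0 < x →
      Fbar x ≤ C * Real.exp (-(Real.sqrt (1 - δ) * (d * Real.sqrt x))) := by
    intro δ hδ0 hδ1
    obtain ⟨r, hrdef⟩ : ∃ r : ℝ, r = Real.exp (-(δ * b)) := ⟨_, rfl⟩
    have hr0 : 0 < r := hrdef ▸ Real.exp_pos _
    have hr1 : r < 1 := by
      rw [hrdef, ← Real.exp_zero]
      apply Real.exp_lt_exp.mpr
      nlinarith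
    refine ⟨p * (1 - r)⁻¹, mul_pos hp0 (inv_pos.mpr (by linarith)), fun x hx => ?_⟩
    rw [hFbar]
    obtain ⟨E, hEdef⟩ : ∃ E : ℝ,
        E = Real.exp (-(Real.sqrt (1 - δ) * (d * Real.sqrt x))) := ⟨_, rfl⟩
    have hE0 : 0 < E := hEdef ▸ Real.exp_pos _
    have key : ∀ i : ℕ, p * q ^ (i + 1) * Real.exp (-lam * x / ((i : ℝ) + 1))
        ≤ (p * E) * r ^ i := by
      intro i
      have hM : (0 : ℝ) < (i : ℝ) + 1 := by positivity
      have h1 : q ^ (i + 1) = r ^ (i + 1) * Real.exp (-((1 - δ) * ((i : ℝ) + 1) * b)) := by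
        rw [← Real.exp_log hq0, ← Real.exp_nat_mul, hrdef, ← Real.exp_nat_mul,
          ← Real.exp_add]
        congr 1
        rw [hlq]
        push_cast; ring
      have h2 : Real.exp (-((1 - δ) * ((i : ℝ) + 1) * b)) *
          Real.exp (-lam * x / ((i : ℝ) + 1)) ≤ E := by
        rw [← Real.exp_add, hEdef]
        apply Real.exp_le_exp.mpr
        have hgm := amgm_aux ((1 - δ) * ((i : ℝ) + 1) * b) (lam * x / ((i : ℝ) + 1))
          (mul_nonneg (mul_nonneg (by linarith) hM.le) hb.le)
          (div_nonneg (mul_nonneg hlam.le hx.le) hM.le)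
        have harg : ((1 - δ) * ((i : ℝ) + 1) * b) * (lam * x / ((i : ℝ) + 1))
            = (1 - δ) * ((lam * b) * x) := by
          field_simp
        rw [harg] at hgm
        have hsq : Real.sqrt ((1 - δ) * ((lam * b) * x))
            = Real.sqrt (1 - δ) * (Real.sqrt (lam * b) * Real.sqrt x) := by
          rw [Real.sqrt_mul (by linarith : (0:ℝ) ≤ 1 - δ), Real.sqrt_mul hlb.le]
        rw [hsq] at hgm
        have h7 : -lam * x / ((i : ℝ) + 1) = -(lam * x / ((i : ℝ) + 1)) := by ring
        rw [h7, hddef]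
        linarith
      have h8 : r ^ (i + 1) ≤ r ^ i :=
        pow_le_pow_of_le_one hr0.le hr1.le (Nat.le_succ i)
      calc p * q ^ (i + 1) * Real.exp (-lam * x / ((i : ℝ) + 1))
          = p * r ^ (i + 1) *
            (Real.exp (-((1 - δ) * ((i : ℝ) + 1) * b)) *
              Real.exp (-lam * x / ((i : ℝ) + 1))) := by rw [h1]; ring
        _ ≤ p * r ^ i * E := by
            apply mul_le_mul (by nlinarith [pow_nonneg hr0.le i]) h2 (by positivity)
              (mul_nonneg hp0.le (pow_nonneg hr0.le i))
        _ = (p * E) * r ^ i := by ring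
    calc (∑' i : ℕ, p * q ^ (i + 1) * Real.exp (-lam * x / ((i : ℝ) + 1)))
        ≤ ∑' i : ℕ, (p * E) * r ^ i :=
          Summable.tsum_le_tsum key (hsummable x hx.le)
            ((summable_geometric_of_lt_one hr0.le hr1).mul_left _)
      _ = (p * E) * (1 - r)⁻¹ := by
          rw [tsum_mul_left, tsum_geometric_of_lt_one hr0.le hr1]
      _ = p * (1 - r)⁻¹ * Real.exp (-(Real.sqrt (1 - δ) * (d * Real.sqrt x))) := by
          rw [hEdef]; ring
  constructor
  · -- part 1
    intro θ hθ
    have h1 : Tendsto (fun x : ℝ => θ * x - d * Real.sqrt x) atTop atTop := by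
      have h2 : Tendsto (fun x : ℝ => Real.sqrt x * (θ * Real.sqrt x - d)) atTop atTop := by
        apply Tendsto.atTop_mul_atTop₀ sqrt_tendsto_aux
        have h3 : Tendsto (fun x : ℝ => θ * Real.sqrt x) atTop atTop :=
          Tendsto.const_mul_atTop hθ sqrt_tendsto_aux
        have := tendsto_atTop_add_const_right atTop (-d) h3
        simpa [sub_eq_add_neg] using this
      apply h2.congr'
      filter_upwards [eventually_ge_atTop (0 : ℝ)] with x hx
      linear_combination θ * (Real.mul_self_sqrt hx)
    have h4 : Tendsto (fun x : ℝ => (p * Real.exp (-b)) *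
        Real.exp (θ * x - d * Real.sqrt x)) atTop atTop :=
      Tendsto.const_mul_atTop (mul_pos hp0 (Real.exp_pos _))
        (Real.tendsto_exp_atTop.comp h1)
    apply tendsto_atTop_mono' atTop _ h4
    filter_upwards [eventually_gt_atTop (0 : ℝ)] with x hx
    have h5 := hlow x hx
    calc (p * Real.exp (-b)) * Real.exp (θ * x - d * Real.sqrt x)
        = Real.exp (θ * x) * (p * Real.exp (-b) * Real.exp (-(d * Real.sqrt x))) := by
          rw [show θ * x - d * Real.sqrt x = θ * x + -(d * Real.sqrt x) by ring,
            Real.exp_add]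
          ring
      _ ≤ Real.exp (θ * x) * Fbar x := by
          apply mul_le_mul_of_nonneg_left h5 (Real.exp_pos _).le
  · -- part 2
    rw [Metric.tendsto_atTop]
    intro ε hε
    obtain ⟨δ, hδdef⟩ : ∃ δ : ℝ, δ = min (ε / 2) (1 / 2) := ⟨_, rfl⟩
    have hδ0 : 0 < δ := hδdef ▸ lt_min (by linarith) (by norm_num)
    have hδ1 : δ < 1 := hδdef ▸ lt_of_le_of_lt (min_le_right _ _) (by norm_num)
    have hδε : δ ≤ ε / 2 := hδdef ▸ min_le_left _ _
    obtain ⟨C, hC0, hCub⟩ := hupp δ hδ0 hδ1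
    obtain ⟨A, hAdef⟩ : ∃ A : ℝ, A = max (b - Real.log p) (Real.log C) := ⟨_, rfl⟩
    have hA0 : 0 < A := hAdef ▸ lt_of_lt_of_le (by linarith) (le_max_left _ _)
    have hLC : Real.log C ≤ A := hAdef ▸ le_max_right _ _
    have hLp : b - Real.log p ≤ A := hAdef ▸ le_max_left _ _
    have hdδ : 0 < d * δ := mul_pos hd hδ0
    refine ⟨max 1 ((2 * A / (d * δ) + 1) ^ 2), fun x hx => ?_⟩
    have hx1 : 1 ≤ x := le_trans (le_max_left _ _) hx
    have hx0 : 0 < x := by linarith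
    obtain ⟨t, htdef⟩ : ∃ t : ℝ, t = Real.sqrt x := ⟨_, rfl⟩
    have ht0 : 0 < t := htdef ▸ Real.sqrt_pos.mpr hx0
    have hdt : 0 < d * t := mul_pos hd ht0
    have htA : 2 * A / (d * δ) + 1 ≤ t := by
      have h9 : (2 * A / (d * δ) + 1) ^ 2 ≤ x := le_trans (le_max_right _ _) hx
      have h9' : 0 ≤ 2 * A / (d * δ) + 1 := by
        have := div_nonneg (by linarith : (0:ℝ) ≤ 2 * A) hdδ.le
        linarith
      calc 2 * A / (d * δ) + 1
          = Real.sqrt ((2 * A / (d * δ) + 1) ^ 2) := (Real.sqrt_sq h9').symm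
        _ ≤ t := htdef ▸ Real.sqrt_le_sqrt h9
    have hAdt : A < δ / 2 * (d * t) := by
      have h10 : 2 * A / (d * δ) < t := by linarith
      rw [div_lt_iff₀ hdδ] at h10
      have h10' : t * (d * δ) = 2 * (δ / 2 * (d * t)) := by ring
      linarith
    -- log upper bound
    have hupp' : Real.log (Fbar x) ≤ Real.log C - Real.sqrt (1 - δ) * (d * t) := by
      have h := Real.log_le_log (hFpos x hx0) (hCub x hx0)
      rw [Real.log_mul hC0.ne' (Real.exp_ne_zero _), Real.log_exp] at h
      rw [htdef]
      linarith
    have hlow' : Real.log p - b - d * t ≤ Real.log (Fbar x) := by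
      rw [htdef]; exact hloglow x hx0
    have hsqδ : 1 - δ ≤ Real.sqrt (1 - δ) := by
      nlinarith [Real.sq_sqrt (show (0:ℝ) ≤ 1 - δ by linarith), Real.sqrt_nonneg (1 - δ),
        sq_nonneg (Real.sqrt (1 - δ) - 1)]
    have hδε2 : 3 * δ / 2 < ε := by linarith
    have key1 : Real.log (Fbar x) < (ε - 1) * (d * t) := by
      nlinarith [mul_nonneg (sub_nonneg.mpr hsqδ) hdt.le,
        mul_pos (show (0:ℝ) < ε - 3 * δ / 2 by linarith) hdt]
    have key2 : -(1 + ε) * (d * t) < Real.log (Fbar x) := by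
      nlinarith [mul_pos (show (0:ℝ) < ε - δ / 2 by linarith) hdt]
    have hden : -2 * Real.sqrt (lam * |Real.log q| * x) = -(d * t) := by
      rw [habs, Real.sqrt_mul hlb.le, hddef, htdef]; ring
    rw [Real.dist_eq, hden, div_neg, abs_lt]
    constructor
    · have h11 : Real.log (Fbar x) / (d * t) < ε - 1 := (div_lt_iff₀ hdt).mpr key1
      linarith
    · have h12 : -(1 + ε) < Real.log (Fbar x) / (d * t) :=
        (lt_div_iff₀ hdt).mpr (by nlinarith)
      linarith
end
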